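/- arXiv:1104.2026 — 2 statements merged into one kernel-verified Lean document; each statement's English description precedes it below -/
import Mathlib

section
/- (Punishment along a deviation path.) Let G be a finite simple graph, C ⊆ V(G), Γ_i ⊆ N_i ∩ C for each i ∈ C, with the control relation reciprocal (j ∈ Γ_i iff i ∈ Γ_j). Fix a player i ∈ C and an action sequence s : ℕ → {0,1} whose first 0 occurs at time T (s_{t'} = 1 for t' < T, s_T = 0). Define the deviation path a : ℕ → V(G) → {0,1} recursively by a^{(t)}(i) = s_t, and for k ≠ i: a^{(t)}(k) = 1 iff k ∈ C and a^{(t')}(j) = 1 for every j ∈ Γ_k and every t' < t. Then every j ∈ C plays a^{(t)}(j) = 1 for all t ≤ T, and every punisher j ∈ Γ_i plays a^{(t)}(j) = 0 for all t > T. -/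
open Finset

/-- Punishment along a deviation path: player `i ∈ C` unilaterally plays the
sequence `s`, whose first defection occurs at time `T`, while every other player
`k` follows the grim-trigger strategy on her control set `Γ k` (players outside
`C` always defect).  Then every grim-trigger follower in `C` collaborates at all
times `t ≤ T`, and every punisher `j ∈ Γ i` defects at all times `t > T`. -/
theorem deviation_path_punishment {V : Type*} [Fintype V] [DecidableEq V]
    (G : SimpleGraph V) [DecidableRel G.Adj]
    (C : Finset V) (Γ : V → Finset V)
    (hΓ : ∀ i ∈ C, Γ i ⊆ G.neighborFinset i ∩ C)
    (hrec : ∀ i ∈ C, ∀ j ∈ C, (j ∈ Γ i ↔ i ∈ Γ j))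
    (i : V) (hi : i ∈ C) (s : ℕ → Bool) (T : ℕ)
    (hs1 : ∀ t' < T, s t' = true) (hsT : s T = false)
    (a : ℕ → V → Bool)
    (hai : ∀ t, a t i = s t)
    (hak : ∀ k, k ≠ i → ∀ t,
      (a t k = true ↔ (k ∈ C ∧ ∀ j ∈ Γ k, ∀ t' < t, a t' j = true))) :
    (∀ j ∈ C, j ≠ i → ∀ t ≤ T, a t j = true) ∧
      (∀ j ∈ Γ i, ∀ t, T < t → a t j = false) := by
  have key : ∀ t ≤ T, ∀ j ∈ C, j ≠ i → a t j = true := by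
    intro t
    induction t using Nat.strong_induction_on with
    | _ t ih =>
      intro htT j hjC hji
      rw [hak j hji t]
      refine ⟨hjC, fun k hk t' ht' => ?_⟩
      have hkC : k ∈ C := (mem_inter.mp (hΓ j hjC hk)).2
      by_cases hki : k = i
      · subst hki
        rw [hai]; exact hs1 t' (lt_of_lt_of_le ht' htT)
      · exact ih t' ht' (le_trans (le_of_lt ht') htT) k hkC hki
  refine ⟨fun j hjC hji t htT => key t htT j hjC hji, fun j hj t hTt => ?_⟩
  have hjC : j ∈ C := (mem_inter.mp (hΓ i hi hj)).2
  have hji : j ≠ i := by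
    intro h
    have hadj := (SimpleGraph.mem_neighborFinset _ _ _).mp (mem_inter.mp (hΓ i hi hj)).1
    rw [h] at hadj
    exact G.irrefl hadj
  have hiΓj : i ∈ Γ j := (hrec i hi j hjC).mp hj
  by_contra h
  have h' : a t j = true := by simpa using h
  have := ((hak j hji t).mp h').2 i hiΓj T hTt
  rw [hai] at this
  simp [hsT] at this
end

section
/- (Proposition 1, Collaborative Equilibria.) Let G be a finite simple graph with costs X_i > 0 and let (C,Γ) be a collaborative-equilibrium structure: Γ_i ⊆ N_i ∩ C, reciprocal control (j ∈ Γ_i iff i ∈ Γ_j), and X_i ≤ γ_i < X_i + 1 where γ_i = |Γ_i|, for all i ∈ C. Consider the strategy profile in which each i ∈ C plays the grim-trigger strategy on Γ_i and each i ∉ C plays 0 at all times. If the discount factor δ ∈ (0,1) satisfies X_i ≤ δ γ_i for every i ∈ C, then this profile is a Nash equilibrium of the repeated game: for every player i and every action sequence s : ℕ → {0,1}, the discounted utility of i along the deviation path (where all other players follow their strategies, evaluated recursively on the realized history) is at most her equilibrium utility, namely |N_i ∩ C| - X_i if i ∈ C and |N_i ∩ C| if i ∉ C. In particular, for δ sufficiently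 close to 1 the profile where players in C collaborate and players outside C defect is a Nash equilibrium. -/
set_option maxHeartbeats 1000000


open Finset

/-- Payoff of player `i` in the one-shot local contribution game. -/
def payoff {V : Type*} [Fintype V] (G : SimpleGraph V) [DecidableRel G.Adj]
    (X : V → ℝ) (s : V → Bool) (i : V) : ℝ :=
  (∑ j ∈ G.neighborFinset i, if s j then (1 : ℝ) else 0) - (if s i then X i else 0)

/-- Proposition 1 (Collaborative Equilibria).  Let `(C,Γ)` be a
collaborative-equilibrium structure: `Γ i ⊆ N_i ∩ C`, reciprocal control, and
`X i ≤ |Γ i| < X i + 1` for all `i ∈ C`.  Consider the profile where each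
`i ∈ C` plays grim trigger on `Γ i` and each `i ∉ C` always defects.  If the
discount factor satisfies `X i ≤ δ·|Γ i|` for every `i ∈ C` (as holds for `δ`
close enough to `1`), then no player can profit by unilaterally deviating: for
any player `i` and any action sequence `s`, the discounted utility of `i` along
the resulting deviation path (all other players following their strategies,
evaluated recursively on the realized history) is at most her equilibrium
utility, `|N_i ∩ C| - X i` if `i ∈ C` and `|N_i ∩ C|` if `i ∉ C`. -/
theorem collaborative_equilibrium {V : Type*} [Fintype V] [DecidableEq V]
    (G : SimpleGraph V) [DecidableRel G.Adj] (X : V → ℝ) (hX : ∀ i, 0 < X i)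
    (C : Finset V) (Γ : V → Finset V)
    (hΓ : ∀ i ∈ C, Γ i ⊆ G.neighborFinset i ∩ C)
    (hrec : ∀ i ∈ C, ∀ j ∈ C, (j ∈ Γ i ↔ i ∈ Γ j))
    (hcard : ∀ i ∈ C, X i ≤ ((Γ i).card : ℝ) ∧ ((Γ i).card : ℝ) < X i + 1)
    (δ : ℝ) (hδ0 : 0 < δ) (hδ1 : δ < 1)
    (hδX : ∀ i ∈ C, X i ≤ δ * ((Γ i).card : ℝ))
    (i : V) (s : ℕ → Bool) (a : ℕ → V → Bool)
    (hai : ∀ t, a t i = s t)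
    (hak : ∀ k, k ≠ i → ∀ t,
      (a t k = true ↔ (k ∈ C ∧ ∀ j ∈ Γ k, ∀ t' < t, a t' j = true))) :
    (1 - δ) * ∑' t : ℕ, δ ^ t * payoff G X (a t) i ≤
      ((G.neighborFinset i ∩ C).card : ℝ) - (if i ∈ C then X i else 0) := by
  have h1δ : 0 < 1 - δ := by linarith
  set m : ℝ := ((G.neighborFinset i ∩ C).card : ℝ) with hm
  have hm0 : 0 ≤ m := Nat.cast_nonneg _
  have hXi0 : 0 < X i := hX i
  -- payoff rewritten via the filter of contributing neighbours
  have hP : ∀ t, payoff G X (a t) i =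
      (((G.neighborFinset i).filter (fun j => a t j = true)).card : ℝ)
        - (if s t then X i else 0) := by
    intro t
    unfold payoff
    rw [hai t]
    congr 1
    rw [← Finset.sum_boole]
  have hsub : ∀ t, (G.neighborFinset i).filter (fun j => a t j = true)
      ⊆ G.neighborFinset i ∩ C := by
    intro t j hj
    rw [Finset.mem_filter] at hj
    obtain ⟨hjN, hjt⟩ := hj
    have hadj : G.Adj i j := (SimpleGraph.mem_neighborFinset _ _ _).mp hjN
    have hji : j ≠ i := hadj.ne'
    exact Finset.mem_inter.mpr ⟨hjN, ((hak j hji t).mp hjt).1⟩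
  have hif0 : ∀ t, 0 ≤ (if s t then X i else 0) := by
    intro t; split <;> [exact hXi0.le; exact le_refl 0]
  have hifX : ∀ t, (if s t then X i else 0) ≤ X i := by
    intro t; split <;> [exact le_refl _; exact hXi0.le]
  have hPle : ∀ t, payoff G X (a t) i ≤ m - (if s t then X i else 0) := by
    intro t
    rw [hP t]
    have := Finset.card_le_card (hsub t)
    have : (((G.neighborFinset i).filter (fun j => a t j = true)).card : ℝ) ≤ m :=
      Nat.cast_le.mpr this
    linarith
  have hPge : ∀ t, -(X i) ≤ payoff G X (a t) i := by
    intro t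
    rw [hP t]
    have h1 : (0:ℝ) ≤ (((G.neighborFinset i).filter (fun j => a t j = true)).card : ℝ) :=
      Nat.cast_nonneg _
    have := hifX t
    linarith
  -- summability
  have hgeo : Summable (fun t : ℕ => δ ^ t) := summable_geometric_of_lt_one hδ0.le hδ1
  have hgeosum : ∑' t : ℕ, δ ^ t = (1 - δ)⁻¹ := tsum_geometric_of_lt_one hδ0.le hδ1
  have habs : ∀ t, |δ ^ t * payoff G X (a t) i| ≤ (m + X i) * δ ^ t := by
    intro t
    have hδt : 0 ≤ δ ^ t := pow_nonneg hδ0.le t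
    rw [abs_mul, abs_of_nonneg hδt]
    have hP1 : |payoff G X (a t) i| ≤ m + X i := by
      rw [abs_le]
      constructor
      · have := hPge t; linarith
      · have := hPle t; have := hif0 t; linarith
    calc δ ^ t * |payoff G X (a t) i| ≤ δ ^ t * (m + X i) :=
          mul_le_mul_of_nonneg_left hP1 hδt
      _ = (m + X i) * δ ^ t := by ring
  have hsum : Summable (fun t => δ ^ t * payoff G X (a t) i) := by
    apply Summable.of_abs
    exact Summable.of_nonneg_of_le (fun t => abs_nonneg _) habs (hgeo.mul_left (m + X i))
  by_cases hiC : i ∈ C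
  · -- player in C
    rw [if_pos hiC]
    by_cases hall : ∀ t, s t = true
    · -- never deviates
      have hb : ∀ t, δ ^ t * payoff G X (a t) i ≤ δ ^ t * (m - X i) := by
        intro t
        apply mul_le_mul_of_nonneg_left _ (pow_nonneg hδ0.le t)
        have := hPle t
        rw [hall t] at this
        simpa using this
      have hts : ∑' t : ℕ, δ ^ t * payoff G X (a t) i ≤ (1 - δ)⁻¹ * (m - X i) := by
        have h2 : ∑' t : ℕ, δ ^ t * (m - X i) = (1 - δ)⁻¹ * (m - X i) := by
          rw [tsum_mul_right, hgeosum]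
        rw [← h2]
        exact Summable.tsum_le_tsum hb hsum (hgeo.mul_right _)
      calc (1 - δ) * ∑' t : ℕ, δ ^ t * payoff G X (a t) i
          ≤ (1 - δ) * ((1 - δ)⁻¹ * (m - X i)) :=
            mul_le_mul_of_nonneg_left hts h1δ.le
        _ = m - X i := by field_simp
    · -- first deviation at time T
      push_neg at hall
      have hex : ∃ t, ¬ s t = true := by
        obtain ⟨t, ht⟩ := hall; exact ⟨t, ht⟩
      obtain ⟨T, hsT, hlt⟩ : ∃ T, s T = false ∧ ∀ t < T, s t = true := by
        refine ⟨Nat.find hex, ?_, ?_⟩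
        · simpa using Nat.find_spec hex
        · intro t ht
          simpa using Nat.find_min hex ht
      -- grim trigger: monitors of i defect after T
      have htrig : ∀ j ∈ Γ i, ∀ t, T < t → a t j = false := by
        intro j hj t ht
        have hjNC := hΓ i hiC hj
        rw [Finset.mem_inter] at hjNC
        have hadj : G.Adj i j := (SimpleGraph.mem_neighborFinset _ _ _).mp hjNC.1
        have hji : j ≠ i := hadj.ne'
        have hiΓj : i ∈ Γ j := (hrec i hiC j hjNC.2).mp hj
        by_contra h
        have hjt : a t j = true := by
          cases h' : a t j with
          | false => exact absurd h' h
          | true => rfl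
        have := ((hak j hji t).mp hjt).2 i hiΓj T ht
        rw [hai T, hsT] at this
        exact Bool.false_ne_true this
      set γ : ℝ := ((Γ i).card : ℝ) with hγ
      have hΓsub : Γ i ⊆ G.neighborFinset i ∩ C := hΓ i hiC
      have hγm : γ ≤ m := Nat.cast_le.mpr (Finset.card_le_card hΓsub)
      have htail : ∀ t, T < t → payoff G X (a t) i ≤ m - γ := by
        intro t ht
        rw [hP t]
        have hsub2 : (G.neighborFinset i).filter (fun j => a t j = true)
            ⊆ (G.neighborFinset i ∩ C) \ Γ i := by
          intro j hj
          rw [Finset.mem_sdiff]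
          refine ⟨hsub t hj, fun hjΓ => ?_⟩
          rw [Finset.mem_filter] at hj
          have := htrig j hjΓ t ht
          rw [this] at hj
          exact Bool.false_ne_true hj.2
        have hc1 : (((G.neighborFinset i).filter (fun j => a t j = true)).card : ℝ)
            ≤ (((G.neighborFinset i ∩ C) \ Γ i).card : ℝ) :=
          Nat.cast_le.mpr (Finset.card_le_card hsub2)
        have hc2 : (((G.neighborFinset i ∩ C) \ Γ i).card : ℝ) = m - γ := by
          rw [Finset.card_sdiff_of_subset hΓsub]
          rw [Nat.cast_sub (Finset.card_le_card hΓsub)]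
        have := hif0 t
        rw [hc2] at hc1
        linarith
      -- split the sum at T+1
      have hkey := Summable.sum_add_tsum_nat_add (f := fun t => δ ^ t * payoff G X (a t) i)
        (T + 1) hsum
      rw [← hkey]
      set F := ∑ t ∈ Finset.range (T + 1), δ ^ t * payoff G X (a t) i with hF
      set Ta := ∑' k : ℕ, δ ^ (k + (T + 1)) * payoff G X (a (k + (T + 1))) i with hTa
      set GT := ∑ t ∈ Finset.range T, δ ^ t with hGT
      have hFle : F ≤ GT * (m - X i) + δ ^ T * m := by
        rw [hF, Finset.sum_range_succ]
        have h1 : ∑ t ∈ Finset.range T, δ ^ t * payoff G X (a t) i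
            ≤ ∑ t ∈ Finset.range T, δ ^ t * (m - X i) := by
          apply Finset.sum_le_sum
          intro t ht
          rw [Finset.mem_range] at ht
          apply mul_le_mul_of_nonneg_left _ (pow_nonneg hδ0.le t)
          have := hPle t
          rw [hlt t ht] at this
          simpa using this
        have h2 : δ ^ T * payoff G X (a T) i ≤ δ ^ T * m := by
          apply mul_le_mul_of_nonneg_left _ (pow_nonneg hδ0.le T)
          have := hPle T
          rw [hsT] at this
          simpa using this
        have h3 : ∑ t ∈ Finset.range T, δ ^ t * (m - X i) = GT * (m - X i) := by
          rw [hGT, Finset.sum_mul]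
        linarith
      have hTale : Ta ≤ δ ^ (T + 1) * (1 - δ)⁻¹ * (m - γ) := by
        have hb : ∀ k : ℕ, δ ^ (k + (T + 1)) * payoff G X (a (k + (T + 1))) i
            ≤ δ ^ (k + (T + 1)) * (m - γ) := by
          intro k
          apply mul_le_mul_of_nonneg_left _ (pow_nonneg hδ0.le _)
          exact htail _ (by omega)
        have hsum2 : Summable (fun k : ℕ =>
            δ ^ (k + (T + 1)) * payoff G X (a (k + (T + 1))) i) :=
          (summable_nat_add_iff (f := fun t => δ ^ t * payoff G X (a t) i) (T + 1)).mpr hsum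
        have hsum3 : Summable (fun k : ℕ => δ ^ (k + (T + 1)) * (m - γ)) :=
          (summable_nat_add_iff (f := fun t => δ ^ t * (m - γ)) (T + 1)).mpr (hgeo.mul_right (m - γ))
        have h2 : ∑' k : ℕ, δ ^ (k + (T + 1)) * (m - γ)
            = δ ^ (T + 1) * (1 - δ)⁻¹ * (m - γ) := by
          have he : ∀ k : ℕ, δ ^ (k + (T + 1)) * (m - γ)
              = δ ^ k * (δ ^ (T + 1) * (m - γ)) := by
            intro k; rw [pow_add]; ring
          simp only [he]
          rw [tsum_mul_right, hgeosum]
          ring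
        rw [hTa, ← h2]
        exact Summable.tsum_le_tsum hb hsum2 hsum3
      have hsumle : F + Ta ≤ GT * (m - X i) + δ ^ T * m + δ ^ (T + 1) * (1 - δ)⁻¹ * (m - γ) := by
        linarith
      have hmain : (1 - δ) * (F + Ta) ≤
          (1 - δ) * (GT * (m - X i) + δ ^ T * m + δ ^ (T + 1) * (1 - δ)⁻¹ * (m - γ)) :=
        mul_le_mul_of_nonneg_left hsumle h1δ.le
      have hGeq : (1 - δ) * GT = 1 - δ ^ T := by
        have := geom_sum_mul δ T
        rw [hGT]
        nlinarith [this]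
      have hinv : (1 - δ) * (1 - δ)⁻¹ = 1 := mul_inv_cancel₀ h1δ.ne'
      have hXδγ : X i ≤ δ * γ := hδX i hiC
      have hq : (0:ℝ) ≤ δ ^ T := pow_nonneg hδ0.le T
      have hfinal : (1 - δ) * (GT * (m - X i) + δ ^ T * m + δ ^ (T + 1) * (1 - δ)⁻¹ * (m - γ))
          ≤ m - X i := by
        have e1 : (1 - δ) * (GT * (m - X i)) = (1 - δ ^ T) * (m - X i) := by
          rw [← mul_assoc, hGeq]
        have e2 : (1 - δ) * (δ ^ (T + 1) * (1 - δ)⁻¹ * (m - γ))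
            = δ * δ ^ T * (m - γ) := by
          rw [pow_succ]
          calc (1 - δ) * (δ ^ T * δ * (1 - δ)⁻¹ * (m - γ))
              = ((1 - δ) * (1 - δ)⁻¹) * (δ * δ ^ T * (m - γ)) := by ring
            _ = δ * δ ^ T * (m - γ) := by rw [hinv]; ring
        have expand : (1 - δ) * (GT * (m - X i) + δ ^ T * m + δ ^ (T + 1) * (1 - δ)⁻¹ * (m - γ))
            = (1 - δ ^ T) * (m - X i) + (1 - δ) * (δ ^ T * m) + δ * δ ^ T * (m - γ) := by
          rw [← e1, ← e2]; ring
        rw [expand]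
        nlinarith [mul_nonneg hq (sub_nonneg.mpr hXδγ)]
      linarith
  · -- player outside C
    rw [if_neg hiC]
    have hb : ∀ t, δ ^ t * payoff G X (a t) i ≤ δ ^ t * m := by
      intro t
      apply mul_le_mul_of_nonneg_left _ (pow_nonneg hδ0.le t)
      have := hPle t
      have := hif0 t
      linarith
    have hts : ∑' t : ℕ, δ ^ t * payoff G X (a t) i ≤ (1 - δ)⁻¹ * m := by
      have h2 : ∑' t : ℕ, δ ^ t * m = (1 - δ)⁻¹ * m := by
        rw [tsum_mul_right, hgeosum]
      rw [← h2]
      exact Summable.tsum_le_tsum hb hsum (hgeo.mul_right _)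
    calc (1 - δ) * ∑' t : ℕ, δ ^ t * payoff G X (a t) i
        ≤ (1 - δ) * ((1 - δ)⁻¹ * m) := mul_le_mul_of_nonneg_left hts h1δ.le
      _ = m - 0 := by field_simp; ring
end
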